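/- Let X be a simplicial complex and σ a nonempty finite collection of subcomplexes of X such that H̃_{|σ|-|τ|-1}(⋂τ, F) = 0 for every nonempty subcollection τ ⊆ σ, where F is a field. Then H̃_{|σ|-2}(⋃σ, F) = 0. -/

import Mathlib

open Finset

/-- The faces of an abstract simplicial complex: a set of nonempty finite sets of
vertices, closed under taking nonempty subsets. -/
def IsComplex {V : Type*} (S : Set (Finset V)) : Prop :=
  (∀ s ∈ S, s.Nonempty) ∧ ∀ s ∈ S, ∀ t ⊆ s, t.Nonempty → t ∈ S

/-- The nerve of a collection `Γ` of (sub)complexes, as a set of finsets of the index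
type: the simplices are the nonempty subcollections with a common face. -/
def nerveC {ι V : Type*} (Γ : ι → Set (Finset V)) : Set (Finset ι) :=
  {σ | σ.Nonempty ∧ (⋂ i ∈ (σ : Finset ι), Γ i).Nonempty}

/-- Simplicial `n`-chains (dimension `n`, i.e. on vertex sets of cardinality `n+1`)
on the vertex type `V`, with coefficients in `A`. -/
abbrev Chains (A V : Type*) [AddCommGroup A] [LinearOrder V] (n : ℕ) : Type _ :=
  {s : Finset V // s.card = n + 1} →₀ A

variable (R : Type*) [CommRing R] (A : Type*) [AddCommGroup A] [Module R A]
variable (V : Type*) [LinearOrder V]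

/-- The simplicial boundary map, with the usual alternating signs determined by the
linear order on the vertices. -/
noncomputable def bdry (n : ℕ) : Chains A V (n + 1) →ₗ[R] Chains A V n :=
  Finsupp.lsum R fun s =>
    ∑ v ∈ (s : Finset V).attach,
      ((-1 : ℤ) ^ (((s : Finset V).filter (fun w => w < v.1)).card)) •
        (Finsupp.lsingle (R := R) ⟨(s : Finset V).erase v.1, by
          rw [Finset.card_erase_of_mem v.2, s.2]; rfl⟩)

/-- The augmentation map on `0`-chains. -/
noncomputable def aug : Chains A V 0 →ₗ[R] A :=
  Finsupp.lsum R fun _ => LinearMap.id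

/-- Reduced cycles: kernel of the boundary map, resp. of the augmentation in degree 0. -/
noncomputable def cycles : (n : ℕ) → Submodule R (Chains A V n)
  | 0 => LinearMap.ker (aug R A V)
  | (n + 1) => LinearMap.ker (bdry R A V n)

/-- Chains supported on the simplices belonging to `S`. -/
def chainsIn (S : Set (Finset V)) (n : ℕ) : Submodule R (Chains A V n) :=
  Finsupp.supported A R {s : {s : Finset V // s.card = n + 1} | ↑s ∈ S}

/-- Reduced cycles of the complex `S`. -/
noncomputable def cyclesIn (S : Set (Finset V)) (n : ℕ) : Submodule R (Chains A V n) :=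
  cycles R A V n ⊓ chainsIn R A V S n

/-- Boundaries of chains of the complex `S`. -/
noncomputable def boundariesIn (S : Set (Finset V)) (n : ℕ) : Submodule R (Chains A V n) :=
  Submodule.map (bdry R A V n) (chainsIn R A V S (n + 1))

/-- Reduced simplicial homology of the complex `S` in degree `n ≥ 0`,
with coefficients in the `R`-module `A`. -/
noncomputable abbrev redH (S : Set (Finset V)) (n : ℕ) : Type _ :=
  (cyclesIn R A V S n) ⧸
    (Submodule.comap (cyclesIn R A V S n).subtype (boundariesIn R A V S n))

/-- Vanishing of the reduced homology of `S` in degree `n : ℤ`, with the convention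
that `H̃₋₁(S) = 0` iff `S` is nonempty (and trivial vanishing below degree `-1`). -/
def RedHVanish (S : Set (Finset V)) (n : ℤ) : Prop :=
  if n < -1 then True
  else if n = -1 then S.Nonempty
  else Subsingleton (redH R A V S n.toNat)

open scoped Classical in
/-- The dimension (rank) of the reduced homology of `S` in degree `n : ℤ`; in degree `-1`
it is `0` iff `S` is nonempty, in accordance with the convention. -/
noncomputable def redHRank (S : Set (Finset V)) (n : ℤ) : Cardinal :=
  if n < -1 then 0
  else if n = -1 then (if S.Nonempty then (0 : Cardinal) else 1)
  else Module.rank R (redH R A V S n.toNat)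




section Lemmas
variable {R : Type*} [CommRing R] {A : Type*} [AddCommGroup A] [Module R A]
variable {V : Type*} [LinearOrder V]

lemma bdry_single (n : ℕ) (s : {s : Finset V // s.card = n + 1 + 1}) (a : A) :
    bdry R A V n (Finsupp.single s a) =
      ∑ v ∈ (s : Finset V).attach,
        ((-1 : ℤ) ^ (((s : Finset V).filter (fun w => w < v.1)).card)) •
          Finsupp.single (⟨(s : Finset V).erase v.1, by
            rw [Finset.card_erase_of_mem v.2, s.2]; rfl⟩ : {t : Finset V // t.card = n + 1}) a := by
  simp [bdry, Finsupp.lsum_single, LinearMap.sum_apply]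

lemma aug_single (s : {s : Finset V // s.card = 0 + 1}) (a : A) :
    aug R A V (Finsupp.single s a) = a := by
  simp [aug]
end Lemmas

section Lemmas2
variable {R : Type*} [CommRing R] {A : Type*} [AddCommGroup A] [Module R A]
variable {V : Type*} [LinearOrder V]

lemma filter_lt_erase_card_of_lt {s : Finset V} {v u : V} (hv : v ∈ s) (h : v < u) :
    (s.filter (fun w => w < u)).card = ((s.erase v).filter (fun w => w < u)).card + 1 := by
  have hmem : v ∈ s.filter (fun w => w < u) := Finset.mem_filter.2 ⟨hv, h⟩
  rw [Finset.filter_erase, Finset.card_erase_of_mem hmem]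
  have : 0 < (s.filter (fun w => w < u)).card := Finset.card_pos.2 ⟨v, hmem⟩
  omega

lemma filter_lt_erase_card_of_gt {s : Finset V} {v u : V} (h : v < u) :
    ((s.erase u).filter (fun w => w < v)).card = (s.filter (fun w => w < v)).card := by
  rw [Finset.filter_erase, Finset.erase_eq_of_notMem]
  simp only [Finset.mem_filter, not_and]
  exact fun _ hlt => absurd (hlt.trans h) (lt_irrefl u)

lemma bdry_bdry_single (n : ℕ) (s : {s : Finset V // s.card = n + 1 + 1 + 1}) (a : A) :
    bdry R A V n (bdry R A V (n + 1) (Finsupp.single s a)) = 0 := by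
  rw [bdry_single, map_sum]
  have hrw : ∀ v ∈ (s : Finset V).attach,
      bdry R A V n (((-1 : ℤ) ^ (((s : Finset V).filter (fun w => w < v.1)).card)) •
        Finsupp.single (⟨(s : Finset V).erase v.1, by
          rw [Finset.card_erase_of_mem v.2, s.2]; rfl⟩ : {t : Finset V // t.card = n + 1 + 1}) a)
      = ∑ u ∈ ((s : Finset V).erase v.1).attach,
          (((-1 : ℤ) ^ (((s : Finset V).filter (fun w => w < v.1)).card)) *
           ((-1 : ℤ) ^ ((((s : Finset V).erase v.1).filter (fun w => w < u.1)).card))) •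
          Finsupp.single (⟨((s : Finset V).erase v.1).erase u.1, by
            rw [Finset.card_erase_of_mem u.2, Finset.card_erase_of_mem v.2, s.2]; rfl⟩ :
            {t : Finset V // t.card = n + 1}) a := by
    intro v _
    rw [map_zsmul, bdry_single, Finset.smul_sum]
    refine Finset.sum_congr rfl fun u _ => ?_
    rw [smul_smul]
  rw [Finset.sum_congr rfl hrw, Finset.sum_sigma']
  refine Finset.sum_involution
    (fun p hp => ⟨⟨p.2.1, Finset.mem_of_mem_erase p.2.2⟩,
      ⟨p.1.1, Finset.mem_erase.2 ⟨(Finset.mem_erase.1 p.2.2).1.symm, p.1.2⟩⟩⟩)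
    ?_ ?_ (fun p hp => Finset.mem_sigma.2 ⟨Finset.mem_attach _ _, Finset.mem_attach _ _⟩)
    (fun p hp => rfl)
  · rintro ⟨⟨v, hv⟩, ⟨u, hu⟩⟩ hp
    have hvu : v ≠ u := ((Finset.mem_erase.1 hu).1).symm
    have hus : u ∈ (s : Finset V) := Finset.mem_of_mem_erase hu
    have hkey : Finsupp.single (⟨((s : Finset V).erase v).erase u, by
        rw [Finset.card_erase_of_mem hu, Finset.card_erase_of_mem hv, s.2]; rfl⟩ :
        {t : Finset V // t.card = n + 1}) a
        = Finsupp.single (⟨((s : Finset V).erase u).erase v, by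
        rw [Finset.card_erase_of_mem (Finset.mem_erase.2 ⟨hvu, hv⟩),
          Finset.card_erase_of_mem hus, s.2]; rfl⟩ :
        {t : Finset V // t.card = n + 1}) a := by
      congr 1
      exact Subtype.ext Finset.erase_right_comm
    rw [hkey, ← add_smul]
    convert zero_smul ℤ _
    rcases lt_or_gt_of_ne hvu with h | h
    · rw [filter_lt_erase_card_of_lt hv h, filter_lt_erase_card_of_gt (s := (s : Finset V)) h]
      ring
    · rw [filter_lt_erase_card_of_lt hus h, filter_lt_erase_card_of_gt (s := (s : Finset V)) h]
      ring
  · rintro ⟨⟨v, hv⟩, ⟨u, hu⟩⟩ hp _ heq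
    exact (Finset.mem_erase.1 hu).1 (show u = v from congrArg (fun q => q.1.1) heq)

end Lemmas2

section Lemmas3
variable {R : Type*} [CommRing R] {A : Type*} [AddCommGroup A] [Module R A]
variable {V : Type*} [LinearOrder V]

lemma bdry_bdry (n : ℕ) (x : Chains A V (n + 1 + 1)) :
    bdry R A V n (bdry R A V (n + 1) x) = 0 := by
  have : (bdry R A V n).comp (bdry R A V (n + 1)) = 0 :=
    Finsupp.lhom_ext fun s a => by
      simpa using bdry_bdry_single (R := R) (A := A) (V := V) n s a
  simpa using LinearMap.congr_fun this x

lemma aug_bdry (x : Chains A V 1) : aug R A V (bdry R A V 0 x) = 0 := by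
  have : (aug R A V).comp (bdry R A V 0) = 0 := by
    refine Finsupp.lhom_ext fun s a => ?_
    simp only [LinearMap.comp_apply, LinearMap.zero_apply, bdry_single, map_sum, map_zsmul,
      aug_single]
    rw [Finset.sum_attach ((s : Finset V)) (fun v =>
      ((-1 : ℤ) ^ (((s : Finset V).filter (fun w => w < v)).card)) • a)]
    obtain ⟨p, q, hpq, hs⟩ := Finset.card_eq_two.1 s.2
    rcases lt_or_gt_of_ne hpq with h | h
    · rw [hs, Finset.sum_pair hpq]
      have h1 : ({p, q} : Finset V).filter (fun w => w < p) = ∅ := by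
        ext w; simp only [Finset.mem_filter, Finset.mem_insert, Finset.mem_singleton,
          Finset.notMem_empty, iff_false]
        rintro ⟨rfl | rfl, hw⟩ <;> exact absurd hw (by simp [h, lt_irrefl, not_lt.2 h.le])
      have h2 : ({p, q} : Finset V).filter (fun w => w < q) = {p} := by
        ext w; simp only [Finset.mem_filter, Finset.mem_insert, Finset.mem_singleton]
        constructor
        · rintro ⟨rfl | rfl, hw⟩; · rfl
          · exact absurd hw (lt_irrefl _)
        · rintro rfl; exact ⟨Or.inl rfl, h⟩
      rw [h1, h2]
      simp
    · rw [hs, Finset.sum_pair hpq]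
      have h1 : ({p, q} : Finset V).filter (fun w => w < p) = {q} := by
        ext w; simp only [Finset.mem_filter, Finset.mem_insert, Finset.mem_singleton]
        constructor
        · rintro ⟨rfl | rfl, hw⟩; · exact absurd hw (lt_irrefl _)
          · rfl
        · rintro rfl; exact ⟨Or.inr rfl, h⟩
      have h2 : ({p, q} : Finset V).filter (fun w => w < q) = ∅ := by
        ext w; simp only [Finset.mem_filter, Finset.mem_insert, Finset.mem_singleton,
          Finset.notMem_empty, iff_false]
        rintro ⟨rfl | rfl, hw⟩ <;> exact absurd hw (by simp [not_lt.2 h.le, lt_irrefl])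
      rw [h1, h2]
      simp
  simpa using LinearMap.congr_fun this x

end Lemmas3

section Lemmas4
variable {R : Type*} [CommRing R] {A : Type*} [AddCommGroup A] [Module R A]
variable {V : Type*} [LinearOrder V]

lemma mem_chainsIn {S : Set (Finset V)} {n : ℕ} {f : Chains A V n} :
    f ∈ chainsIn R A V S n ↔ ∀ s ∈ f.support, (s : Finset V) ∈ S := by
  rw [chainsIn, Finsupp.mem_supported]
  constructor
  · intro h s hs; exact h hs
  · intro h s hs; exact h s hs

lemma chainsIn_mono {S T : Set (Finset V)} (h : S ⊆ T) (n : ℕ) :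
    chainsIn R A V S n ≤ chainsIn R A V T n := by
  intro f hf
  rw [mem_chainsIn] at hf ⊢
  exact fun s hs => h (hf s hs)

lemma chainsIn_inter (Y Z : Set (Finset V)) (n : ℕ) :
    chainsIn R A V (Y ∩ Z) n = chainsIn R A V Y n ⊓ (chainsIn R A V Z n : Submodule R (Chains A V n)) := by
  ext f
  simp only [Submodule.mem_inf, mem_chainsIn, Set.mem_inter_iff]
  constructor
  · exact fun h => ⟨fun s hs => (h s hs).1, fun s hs => (h s hs).2⟩
  · exact fun h s hs => ⟨h.1 s hs, h.2 s hs⟩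

lemma bdry_mem_chainsIn {S : Set (Finset V)} (hS : IsComplex S) {n : ℕ} {x : Chains A V (n + 1)}
    (hx : x ∈ chainsIn R A V S (n + 1)) : bdry R A V n x ∈ chainsIn R A V S n := by
  rw [mem_chainsIn] at hx ⊢
  intro t ht
  classical
  rw [bdry, Finsupp.lsum_apply] at ht
  have h1 := Finsupp.support_sum ht
  rw [Finset.mem_biUnion] at h1
  obtain ⟨s, hs, hts⟩ := h1
  rw [LinearMap.sum_apply] at hts
  obtain ⟨v, _, htv⟩ := Finsupp.mem_support_finset_sum t hts
  rw [LinearMap.smul_apply] at htv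
  have htv' := Finsupp.support_smul htv
  rw [Finsupp.lsingle_apply] at htv'
  have h2 := (Finsupp.mem_support_single _ _ _).1 htv'
  have hts' : (t : Finset V) = (s : Finset V).erase v.1 := by rw [h2.1]
  rw [hts']
  exact hS.2 _ (hx s hs) _ (Finset.erase_subset _ _)
    (Finset.card_pos.1 (by rw [Finset.card_erase_of_mem v.2, s.2]; omega))

end Lemmas4

section Lemmas5
variable {R : Type*} [CommRing R] {A : Type*} [AddCommGroup A] [Module R A]
variable {V : Type*} [LinearOrder V]

lemma chains_decompose {Y Z : Set (Finset V)} {n : ℕ} {z : Chains A V n}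
    (hz : z ∈ chainsIn R A V (Y ∪ Z) n) :
    ∃ x y : Chains A V n, x ∈ chainsIn R A V Y n ∧ y ∈ chainsIn R A V Z n ∧ z = x + y := by
  classical
  refine ⟨z.filter (fun s => (s : Finset V) ∈ Y), z.filter (fun s => ¬ (s : Finset V) ∈ Y),
    ?_, ?_, ?_⟩
  · rw [mem_chainsIn]
    intro s hs
    rw [Finsupp.support_filter, Finset.mem_filter] at hs
    exact hs.2
  · rw [mem_chainsIn] at hz ⊢
    intro s hs
    rw [Finsupp.support_filter, Finset.mem_filter] at hs
    rcases hz s hs.1 with h | h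
    · exact absurd h hs.2
    · exact h
  · exact (Finsupp.filter_pos_add_filter_neg z _).symm

lemma subsingleton_redH_iff {S : Set (Finset V)} {n : ℕ} :
    Subsingleton (redH R A V S n) ↔
      ∀ z : Chains A V n, z ∈ cyclesIn R A V S n → z ∈ boundariesIn R A V S n := by
  rw [Submodule.Quotient.subsingleton_iff, Submodule.eq_top_iff']
  constructor
  · intro h z hz
    exact h ⟨z, hz⟩
  · intro h x
    exact h x.1 x.2

lemma isComplex_inter {Y Z : Set (Finset V)} (hY : IsComplex Y) (hZ : IsComplex Z) :
    IsComplex (Y ∩ Z) :=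
  ⟨fun s hs => hY.1 s hs.1, fun s hs t hts htne =>
    ⟨hY.2 s hs.1 t hts htne, hZ.2 s hs.2 t hts htne⟩⟩

lemma isComplex_biUnion {ι : Type*} (s : Finset ι) (Γ : ι → Set (Finset V))
    (h : ∀ i, IsComplex (Γ i)) : IsComplex (⋃ i ∈ s, Γ i) := by
  constructor
  · intro t ht
    rw [Set.mem_iUnion₂] at ht
    obtain ⟨i, _, hti⟩ := ht
    exact (h i).1 t hti
  · intro t ht u hut hune
    rw [Set.mem_iUnion₂] at ht ⊢
    obtain ⟨i, hi, hti⟩ := ht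
    exact ⟨i, hi, (h i).2 t hti u hut hune⟩

lemma exists_vertex {S : Set (Finset V)} (hS : IsComplex S) (hne : S.Nonempty) :
    ∃ v : V, {v} ∈ S := by
  obtain ⟨s, hs⟩ := hne
  obtain ⟨v, hv⟩ := hS.1 s hs
  exact ⟨v, hS.2 s hs {v} (Finset.singleton_subset_iff.2 hv) (Finset.singleton_nonempty v)⟩

end Lemmas5

section Lemmas6
variable {R : Type*} [CommRing R] {A : Type*} [AddCommGroup A] [Module R A]
variable {V : Type*} [LinearOrder V]

lemma mem_cycles_zero {x : Chains A V 0} :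
    x ∈ cycles R A V 0 ↔ aug R A V x = 0 := Iff.rfl

lemma mem_cycles_succ {m : ℕ} {x : Chains A V (m + 1)} :
    x ∈ cycles R A V (m + 1) ↔ bdry R A V m x = 0 := Iff.rfl

lemma bdry_mem_cycles (m : ℕ) (x : Chains A V (m + 1)) :
    bdry R A V m x ∈ cycles R A V m := by
  cases m with
  | zero => exact mem_cycles_zero.2 (aug_bdry x)
  | succ k => exact mem_cycles_succ.2 (bdry_bdry k x)

lemma boundariesIn_mono {S T : Set (Finset V)} (h : S ⊆ T) (n : ℕ) :
    boundariesIn R A V S n ≤ boundariesIn R A V T n :=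
  Submodule.map_mono (chainsIn_mono h _)

lemma single_mem_chainsIn {S : Set (Finset V)} {n : ℕ} {s : {s : Finset V // s.card = n + 1}}
    (hs : (s : Finset V) ∈ S) (a : A) :
    Finsupp.single s a ∈ chainsIn R A V S n := by
  rw [mem_chainsIn]
  intro t ht
  have := Finsupp.support_single_subset ht
  rw [Finset.mem_singleton] at this
  rw [this]; exact hs

lemma MV_zero {Y Z : Set (Finset V)} (hY : IsComplex Y) (hZ : IsComplex Z)
    (hy : ∀ z : Chains A V 0, z ∈ cyclesIn R A V Y 0 → z ∈ boundariesIn R A V Y 0)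
    (hz : ∀ z : Chains A V 0, z ∈ cyclesIn R A V Z 0 → z ∈ boundariesIn R A V Z 0)
    (hw : (Y ∩ Z).Nonempty) :
    ∀ z : Chains A V 0, z ∈ cyclesIn R A V (Y ∪ Z) 0 → z ∈ boundariesIn R A V (Y ∪ Z) 0 := by
  intro z hzmem
  obtain ⟨hzc, hzch⟩ := Submodule.mem_inf.1 hzmem
  obtain ⟨x, y, hx, hy', rfl⟩ := chains_decompose hzch
  obtain ⟨v, hv⟩ := exists_vertex (isComplex_inter hY hZ) hw
  set e : Chains A V 0 := Finsupp.single ⟨{v}, Finset.card_singleton v⟩ (aug R A V x) with he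
  have haugz : aug R A V x + aug R A V y = 0 := by
    rw [← map_add]; exact mem_cycles_zero.1 hzc
  have hx' : x - e ∈ cyclesIn R A V Y 0 := by
    refine Submodule.mem_inf.2 ⟨mem_cycles_zero.2 ?_, ?_⟩
    · rw [map_sub, he, aug_single, sub_self]
    · exact Submodule.sub_mem _ (by exact hx) (single_mem_chainsIn hv.1 _)
  have hy2 : y + e ∈ cyclesIn R A V Z 0 := by
    refine Submodule.mem_inf.2 ⟨mem_cycles_zero.2 ?_, ?_⟩
    · rw [map_add, he, aug_single, add_comm]; exact haugz
    · exact Submodule.add_mem _ (by exact hy') (single_mem_chainsIn hv.2 _)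
  have h1 := boundariesIn_mono (Set.subset_union_left (s := Y) (t := Z)) 0 (hy _ hx')
  have h2 := boundariesIn_mono (Set.subset_union_right (s := Y) (t := Z)) 0 (hz _ hy2)
  have : x + y = (x - e) + (y + e) := by abel
  rw [this]
  exact Submodule.add_mem _ h1 h2

end Lemmas6

section Lemmas7
variable {R : Type*} [CommRing R] {A : Type*} [AddCommGroup A] [Module R A]
variable {V : Type*} [LinearOrder V]

lemma MV_succ {Y Z : Set (Finset V)} (hY : IsComplex Y) (hZ : IsComplex Z) (m : ℕ)
    (hy : ∀ z : Chains A V (m + 1), z ∈ cyclesIn R A V Y (m + 1) →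
      z ∈ boundariesIn R A V Y (m + 1))
    (hz : ∀ z : Chains A V (m + 1), z ∈ cyclesIn R A V Z (m + 1) →
      z ∈ boundariesIn R A V Z (m + 1))
    (hw : ∀ w : Chains A V m, w ∈ cyclesIn R A V (Y ∩ Z) m →
      w ∈ boundariesIn R A V (Y ∩ Z) m) :
    ∀ z : Chains A V (m + 1), z ∈ cyclesIn R A V (Y ∪ Z) (m + 1) →
      z ∈ boundariesIn R A V (Y ∪ Z) (m + 1) := by
  intro z hzmem
  obtain ⟨hzc, hzch⟩ := Submodule.mem_inf.1 hzmem
  obtain ⟨x, y, hx, hy', rfl⟩ := chains_decompose hzch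
  have hsum : bdry R A V m x + bdry R A V m y = 0 := by
    rw [← map_add]; exact mem_cycles_succ.1 hzc
  have hbx : bdry R A V m x ∈ chainsIn R A V (Y ∩ Z) m := by
    rw [chainsIn_inter]
    refine Submodule.mem_inf.2 ⟨bdry_mem_chainsIn hY hx, ?_⟩
    have : bdry R A V m x = -(bdry R A V m y) := by
      rw [eq_neg_iff_add_eq_zero]; exact hsum
    rw [this]
    exact Submodule.neg_mem _ (bdry_mem_chainsIn hZ hy')
  have hbxcyc : bdry R A V m x ∈ cyclesIn R A V (Y ∩ Z) m :=
    Submodule.mem_inf.2 ⟨bdry_mem_cycles m x, hbx⟩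
  obtain ⟨w, hw1, hw2⟩ := Submodule.mem_map.1 (hw _ hbxcyc)
  have hxw : x - w ∈ cyclesIn R A V Y (m + 1) := by
    refine Submodule.mem_inf.2 ⟨mem_cycles_succ.2 ?_, ?_⟩
    · rw [map_sub, hw2, sub_self]
    · exact Submodule.sub_mem _ hx
        (chainsIn_mono Set.inter_subset_left _ hw1)
  have hyw : y + w ∈ cyclesIn R A V Z (m + 1) := by
    refine Submodule.mem_inf.2 ⟨mem_cycles_succ.2 ?_, ?_⟩
    · rw [map_add, hw2]
      rw [add_comm] at hsum
      exact hsum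
    · exact Submodule.add_mem _ hy'
        (chainsIn_mono Set.inter_subset_right _ hw1)
  have h1 := boundariesIn_mono (Set.subset_union_left (s := Y) (t := Z)) (m + 1) (hy _ hxw)
  have h2 := boundariesIn_mono (Set.subset_union_right (s := Y) (t := Z)) (m + 1) (hz _ hyw)
  have : x + y = (x - w) + (y + w) := by abel
  rw [this]
  exact Submodule.add_mem _ h1 h2

end Lemmas7

section Lemmas8
variable {R : Type*} [CommRing R] {A : Type*} [AddCommGroup A] [Module R A]
variable {V : Type*} [LinearOrder V]

lemma MV_int {Y Z : Set (Finset V)} (hY : IsComplex Y) (hZ : IsComplex Z) (d : ℤ)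
    (hy : RedHVanish R A V Y d) (hz : RedHVanish R A V Z d)
    (hw : RedHVanish R A V (Y ∩ Z) (d - 1)) :
    RedHVanish R A V (Y ∪ Z) d := by
  rcases lt_trichotomy d (-1) with h | h | h
  · rw [RedHVanish, if_pos h]; trivial
  · subst h
    rw [RedHVanish, if_neg (by omega), if_pos rfl] at hy ⊢
    exact hy.mono Set.subset_union_left
  · obtain ⟨n, rfl⟩ : ∃ n : ℕ, d = (n : ℤ) := ⟨d.toNat, (Int.toNat_of_nonneg (by omega)).symm⟩
    rw [RedHVanish, if_neg (by omega), if_neg (by omega)] at hy hz ⊢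
    rw [Int.toNat_natCast] at hy hz ⊢
    cases n with
    | zero =>
      rw [subsingleton_redH_iff] at hy hz ⊢
      rw [show ((0 : ℕ) : ℤ) - 1 = -1 by ring, RedHVanish, if_neg (by omega), if_pos rfl] at hw
      exact MV_zero hY hZ hy hz hw
    | succ m =>
      rw [subsingleton_redH_iff] at hy hz ⊢
      rw [show ((m + 1 : ℕ) : ℤ) - 1 = (m : ℤ) by push_cast; ring, RedHVanish,
        if_neg (by omega), if_neg (by omega), Int.toNat_natCast, subsingleton_redH_iff] at hw
      exact MV_succ hY hZ m hy hz hw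

end Lemmas8

section Lemmas9
variable {R : Type*} [CommRing R] {A : Type*} [AddCommGroup A] [Module R A]
variable {V : Type*} [LinearOrder V]

lemma biInter_inter {ι : Type*} {τ : Finset ι} (hne : τ.Nonempty) (Γ : ι → Set (Finset V))
    (B : Set (Finset V)) : ⋂ i ∈ τ, (Γ i ∩ B) = (⋂ i ∈ τ, Γ i) ∩ B := by
  ext t
  simp only [Set.mem_iInter, Set.mem_inter_iff]
  constructor
  · intro h
    obtain ⟨j, hj⟩ := hne
    exact ⟨fun i hi => (h i hi).1, (h j hj).2⟩
  · rintro ⟨h1, h2⟩ i hi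
    exact ⟨h1 i hi, h2⟩

lemma biUnion_inter {ι : Type*} (τ : Finset ι) (Γ : ι → Set (Finset V))
    (B : Set (Finset V)) : ⋃ i ∈ τ, (Γ i ∩ B) = (⋃ i ∈ τ, Γ i) ∩ B := by
  ext t
  simp only [Set.mem_iUnion, Set.mem_inter_iff]
  constructor
  · rintro ⟨i, hi, h1, h2⟩
    exact ⟨⟨i, hi, h1⟩, h2⟩
  · rintro ⟨⟨i, hi, h1⟩, h2⟩
    exact ⟨i, hi, h1, h2⟩

lemma key {ι : Type*} [DecidableEq ι] : ∀ (N : ℕ) (σ : Finset ι), σ.card = N →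
    ∀ (d : ℤ) (Γ : ι → Set (Finset V)), (∀ i, IsComplex (Γ i)) → σ.Nonempty →
    (∀ τ ⊆ σ, τ.Nonempty → RedHVanish R A V (⋂ i ∈ τ, Γ i) (d - τ.card + 1)) →
    RedHVanish R A V (⋃ i ∈ σ, Γ i) d := by
  intro N
  induction N with
  | zero =>
    intro σ hcard d Γ _ hne _
    exact absurd hcard (by simpa [Finset.card_eq_zero] using hne.ne_empty)
  | succ N ih =>
    intro σ hcard d Γ hcx hne h
    rcases Nat.eq_zero_or_pos N with rfl | hNpos
    · -- σ is a singleton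
      obtain ⟨a, rfl⟩ := Finset.card_eq_one.1 hcard
      have h1 := h {a} (Finset.Subset.refl _) (Finset.singleton_nonempty a)
      have hdeg : d - (({a} : Finset ι).card : ℤ) + 1 = d := by
        rw [Finset.card_singleton]; push_cast; ring
      rw [hdeg] at h1
      have hset : (⋂ i ∈ ({a} : Finset ι), Γ i) = ⋃ i ∈ ({a} : Finset ι), Γ i := by
        ext t; simp
      rwa [hset] at h1
    · obtain ⟨a, ha⟩ := hne
      set s := σ.erase a with hs
      have hscard : s.card = N := by
        rw [hs, Finset.card_erase_of_mem ha, hcard]; omega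
      have hsne : s.Nonempty := Finset.card_pos.1 (by omega)
      have hσ : σ = insert a s := by rw [hs, Finset.insert_erase ha]
      have hsubσ : s ⊆ σ := Finset.erase_subset _ _
      -- Y = union over s, Z = Γ a
      have hy : RedHVanish R A V (⋃ i ∈ s, Γ i) d :=
        ih s hscard d Γ hcx hsne (fun τ hτ hτne => h τ (hτ.trans hsubσ) hτne)
      have hz : RedHVanish R A V (Γ a) d := by
        have h1 := h {a} (Finset.singleton_subset_iff.2 ha) (Finset.singleton_nonempty a)
        have hdeg : d - (({a} : Finset ι).card : ℤ) + 1 = d := by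
          rw [Finset.card_singleton]; push_cast; ring
        rw [hdeg] at h1
        have hset : (⋂ i ∈ ({a} : Finset ι), Γ i) = Γ a := by ext t; simp
        rwa [hset] at h1
      have hw : RedHVanish R A V ((⋃ i ∈ s, Γ i) ∩ Γ a) (d - 1) := by
        rw [← _root_.biUnion_inter]
        refine ih s hscard (d - 1) (fun i => Γ i ∩ Γ a)
          (fun i => isComplex_inter (hcx i) (hcx a)) hsne ?_
        intro τ hτs hτne
        have haτ : a ∉ τ := fun hmem => (Finset.mem_erase.1 (hτs hmem)).1 rfl
        have h1 := h (insert a τ) (Finset.insert_subset ha (hτs.trans hsubσ)) ⟨a, Finset.mem_insert_self a τ⟩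
        have hcardins : ((insert a τ).card : ℤ) = (τ.card : ℤ) + 1 := by
          rw [Finset.card_insert_of_notMem haτ]; push_cast; ring
        have hdeg : d - ((insert a τ).card : ℤ) + 1 = d - 1 - (τ.card : ℤ) + 1 := by
          rw [hcardins]; ring
        rw [hdeg] at h1
        have hset : (⋂ i ∈ insert a τ, Γ i) = ⋂ i ∈ τ, (Γ i ∩ Γ a) := by
          rw [biInter_inter hτne, Finset.set_biInter_insert]
          rw [Set.inter_comm]
        rwa [hset] at h1
      have := MV_int (isComplex_biUnion s Γ hcx) (hcx a) d hy hz hw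
      have hset : (⋃ i ∈ σ, Γ i) = (⋃ i ∈ s, Γ i) ∪ Γ a := by
        rw [hσ, Finset.set_biUnion_insert, Set.union_comm]
      rwa [hset]

end Lemmas9


/-- If `H̃_{|σ|-|τ|-1}(⋂τ) = 0` for every nonempty subcollection `τ` of `σ`, then
`H̃_{|σ|-2}(⋃σ) = 0`. -/
theorem union_vanishing_of_intersections {V ι : Type*} [LinearOrder V] [Fintype ι]
    [Nonempty ι] (F : Type*) [Field F]
    (X : Set (Finset V)) (hX : IsComplex X)
    (Γ : ι → Set (Finset V)) (hΓ : ∀ i, IsComplex (Γ i) ∧ Γ i ⊆ X)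
    (h : ∀ τ : Finset ι, τ.Nonempty →
      RedHVanish F F V (⋂ i ∈ τ, Γ i) ((Fintype.card ι : ℤ) - τ.card - 1)) :
    RedHVanish F F V (⋃ i, Γ i) ((Fintype.card ι : ℤ) - 2) := by
  classical
  have hkey := key (R := F) (A := F) (V := V) (Fintype.card ι) (Finset.univ : Finset ι)
    (Finset.card_univ) ((Fintype.card ι : ℤ) - 2) Γ (fun i => (hΓ i).1)
    Finset.univ_nonempty ?_
  · have hset : (⋃ i ∈ (Finset.univ : Finset ι), Γ i) = ⋃ i, Γ i := by
      ext t; simp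
    rwa [hset] at hkey
  · intro τ _ hτne
    have hdeg : (Fintype.card ι : ℤ) - 2 - (τ.card : ℤ) + 1
        = (Fintype.card ι : ℤ) - (τ.card : ℤ) - 1 := by ring
    rw [hdeg]
    exact h τ hτne
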